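/- Let m > 1 be an integer and α ∈ (0,1). Suppose F is continuously differentiable on [0,1], with ρ = F^{(1)} satisfying ρ(y) > 0 for y ∈ (0,1). Let x ∈ (0,1). Assume m/n ≤ ρ(x)/l_α² and |B_{m,1}(ρ;x) − ρ(x)| ≤ min( ρ(x)/l_α², l_α·√(m·ρ(x)/n) ). Then P( |B_m^{(1)}(Y_n;x) − ρ(x)| ≥ (2l_α + 1/l_α)·√(m·ρ(x)/n) ) ≤ α. -/

import Mathlib

open Set Finset MeasureTheory ProbabilityTheory

/-- Bernstein basis polynomial `p_{m,k}(x) = C(m,k) x^k (1-x)^{m-k}`. -/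
noncomputable def bern (m k : ℕ) (x : ℝ) : ℝ :=
  (m.choose k : ℝ) * x ^ k * (1 - x) ^ (m - k)

/-- Empirical distribution function `Y_n(x) = (1/n) Σ_r 1{X_r ≤ x}`. -/
noncomputable def empY {Ω : Type*} (n : ℕ) (X : Fin n → Ω → ℝ) (x : ℝ) (ω : Ω) : ℝ :=
  (1 / n : ℝ) * ∑ r, (if X r ω ≤ x then (1 : ℝ) else 0)

/-- Random Bernstein polynomial `B_m(Y_n;x)`, as a function of `x` for each `ω`. -/
noncomputable def BY {Ω : Type*} (m n : ℕ) (X : Fin n → Ω → ℝ) (ω : Ω) (x : ℝ) : ℝ :=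
  ∑ k ∈ Finset.range (m + 1), empY n X ((k : ℝ) / m) ω * bern m k x

/-- Bernstein–Kantorovich operator with `k = 1`:
`B_{m,1}(f;x) = Σ_{l=0}^{m-1} p_{m-1,l}(x) ∫₀¹ f((l+t)/m) dt`. -/
noncomputable def BK1 (m : ℕ) (f : ℝ → ℝ) (x : ℝ) : ℝ :=
  ∑ l ∈ Finset.range (m - 1 + 1), bern (m - 1) l x *
    ∫ t in (0:ℝ)..1, f (((l : ℝ) + t) / m)

/-- `l_α = √(3 log(2 e^{1/3} / α))`. -/
noncomputable def lAlpha (α : ℝ) : ℝ :=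
  Real.sqrt (3 * Real.log (2 * Real.exp (1 / 3) / α))

/-! ### Auxiliary elementary inequalities -/

lemma my_exp_upper {x : ℝ} (h0 : 0 ≤ x) (h1 : x ≤ 1) :
    Real.exp x ≤ 1 + x + (109/150) * x ^ 2 := by
  have h := Real.exp_bound' h0 h1 (n := 5) (by norm_num)
  have hx2 : x ^ 3 ≤ x ^ 2 := pow_le_pow_of_le_one h0 h1 (by norm_num)
  have hx3 : x ^ 4 ≤ x ^ 2 := pow_le_pow_of_le_one h0 h1 (by norm_num)
  have hx5 : x ^ 5 ≤ x ^ 2 := pow_le_pow_of_le_one h0 h1 (by norm_num)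
  simp [Finset.sum_range_succ, Nat.factorial] at h
  nlinarith

lemma my_exp_neg_upper {x : ℝ} (h0 : 0 ≤ x) :
    Real.exp (-x) ≤ 1 - x + x ^ 2 / 2 := by
  have hq := Real.quadratic_le_exp_of_nonneg h0
  have hpos : (0:ℝ) < 1 + x + x ^ 2 / 2 := by positivity
  have h2 : Real.exp (-x) ≤ 1 / (1 + x + x ^ 2 / 2) := by
    rw [Real.exp_neg, inv_eq_one_div]
    exact one_div_le_one_div_of_le hpos hq
  refine h2.trans ?_
  rw [div_le_iff₀ hpos]
  nlinarith [sq_nonneg (x^2)]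

/-! ### Bernstein basis facts -/

lemma bern_nonneg {m k : ℕ} {x : ℝ} (h0 : 0 ≤ x) (h1 : x ≤ 1) : 0 ≤ bern m k x := by
  unfold bern; have : 0 ≤ 1 - x := by linarith
  positivity

lemma bern_sum (m : ℕ) (x : ℝ) : ∑ k ∈ range (m + 1), bern m k x = 1 := by
  have h := add_pow x (1 - x) m
  simp only [add_sub_cancel, one_pow] at h
  rw [← h.symm]
  apply Finset.sum_congr rfl
  intro k hk
  unfold bern
  ring

lemma bern_gt_zero {m k : ℕ} (x : ℝ) (h : m < k) : bern m k x = 0 := by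
  unfold bern; rw [Nat.choose_eq_zero_of_lt h]; simp

lemma hasDerivAt_bern_combo (m : ℕ) (hm : 1 ≤ m) (c : ℕ → ℝ) (x : ℝ) :
    HasDerivAt (fun y => ∑ k ∈ range (m + 1), c k * bern m k y)
      ((m : ℝ) * ∑ l ∈ range m, (c (l + 1) - c l) * bern (m - 1) l x) x := by
  have key : ∀ k ∈ range (m + 1), HasDerivAt (fun y => c k * bern m k y)
      ((if k = 0 then 0 else c k * ((m : ℝ) * bern (m - 1) (k - 1) x))
        - c k * ((m : ℝ) * bern (m - 1) k x)) x := by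
    intro k hk
    have hkm : k ≤ m := Nat.lt_succ_iff.mp (mem_range.mp hk)
    have h1 : HasDerivAt (fun y : ℝ => y ^ k) ((k : ℝ) * x ^ (k - 1)) x := hasDerivAt_pow k x
    have h2 : HasDerivAt (fun y : ℝ => (1 - y) ^ (m - k))
        (((m - k : ℕ) : ℝ) * (1 - x) ^ (m - k - 1) * (0 - 1)) x := by
      exact (hasDerivAt_pow (m - k) (1 - x)).comp x ((hasDerivAt_const x (1:ℝ)).sub (hasDerivAt_id x))
    have h3 := (h1.mul h2).const_mul (c k * (m.choose k : ℝ))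
    have hfun : (fun y : ℝ => c k * (m.choose k : ℝ) * (y ^ k * (1 - y) ^ (m - k)))
        = fun y => c k * bern m k y := by
      funext y; unfold bern; ring
    simp only [Pi.mul_apply] at h3
    rw [hfun] at h3
    refine h3.congr_deriv ?_
    symm
    rcases Nat.eq_zero_or_pos k with rfl | hkpos
    · simp [bern, Nat.sub_zero]
    · obtain ⟨j, rfl⟩ : ∃ j, k = j + 1 := ⟨k - 1, by omega⟩
      have hjm : j + 1 ≤ m := hkm
      have hms : (m - 1) + 1 = m := by omega
      have I1 : ((j + 1 : ℕ) : ℝ) * (m.choose (j + 1) : ℝ) = (m : ℝ) * ((m - 1).choose j : ℝ) := by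
        have h0 := Nat.add_one_mul_choose_eq (m - 1) j
        simp only [Nat.succ_eq_add_one, hms] at h0
        have h0' := congrArg (fun t : ℕ => (t : ℝ)) h0
        push_cast at h0' ⊢
        linarith
      have I2 : ((m : ℝ) - ((j + 1 : ℕ) : ℝ)) * (m.choose (j + 1) : ℝ)
          = (m : ℝ) * ((m - 1).choose (j + 1) : ℝ) := by
        have h4 : m.choose (j + 1) * (m - (j + 1)) = m.choose (j + 1 + 1) * (j + 1 + 1) :=
          (Nat.choose_succ_right_eq m (j + 1)).symm
        have h5 := Nat.add_one_mul_choose_eq (m - 1) (j + 1)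
        simp only [Nat.succ_eq_add_one, hms] at h5
        have h6 : m.choose (j + 1) * (m - (j + 1)) = m * ((m - 1).choose (j + 1)) := by
          rw [h4, ← h5]
        have h7 := congrArg (fun t : ℕ => (t : ℝ)) h6
        push_cast [Nat.cast_sub hjm] at h7 ⊢
        linarith
      simp only [if_neg (Nat.succ_ne_zero j), bern, Nat.add_sub_cancel]
      have e2 : m - 1 - j = m - (j + 1) := by omega
      have e3 : m - 1 - (j + 1) = m - (j + 1) - 1 := by omega
      rw [e2, e3]
      have hc : ((m - (j+1) : ℕ) : ℝ) = (m : ℝ) - ((j + 1 : ℕ) : ℝ) := by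
        push_cast [Nat.cast_sub hjm]; ring
      rw [hc]
      linear_combination (-(c (j+1) * x ^ j * (1 - x) ^ (m - (j + 1)))) * I1
        + (c (j+1) * x ^ (j+1) * (1 - x) ^ (m - (j+1) - 1)) * I2
  have hsum := HasDerivAt.fun_sum key
  refine hsum.congr_deriv ?_
  symm
  rw [Finset.sum_sub_distrib]
  rw [Finset.sum_range_succ' (fun k => if k = 0 then 0 else c k * ((m : ℝ) * bern (m - 1) (k - 1) x)) m]
  rw [Finset.sum_range_succ (fun k => c k * ((m : ℝ) * bern (m - 1) k x)) m]
  rw [bern_gt_zero x (by omega : m - 1 < m)]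
  norm_num
  rw [Finset.mul_sum, ← Finset.sum_sub_distrib]
  apply Finset.sum_congr rfl
  intro l _
  ring

/-! ### Calculus facts -/

lemma ftc_piece (F ρ : ℝ → ℝ) (hFcont : Continuous F) (hF : ContDiffOn ℝ 1 F (Set.Icc 0 1))
    (hρ : ρ = derivWithin F (Set.Icc 0 1)) {a b : ℝ} (hab : a ≤ b) (h0 : 0 ≤ a) (h1 : b ≤ 1) :
    ∫ y in a..b, ρ y = F b - F a := by
  have hρc : ContinuousOn ρ (Set.Icc 0 1) := by
    rw [hρ]
    exact hF.continuousOn_derivWithin (uniqueDiffOn_Icc one_pos) le_rfl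
  apply intervalIntegral.integral_eq_sub_of_hasDeriv_right_of_le hab (hFcont.continuousOn)
  · intro y hy
    have hy01 : y ∈ Set.Ioo (0:ℝ) 1 := ⟨lt_of_le_of_lt h0 hy.1, lt_of_lt_of_le hy.2 h1⟩
    have hdiff : DifferentiableWithinAt ℝ F (Set.Icc 0 1) y :=
      (hF.differentiableOn one_ne_zero) y (Set.mem_Icc_of_Ioo hy01)
    have hd : HasDerivWithinAt F (ρ y) (Set.Icc 0 1) y := by
      rw [hρ]; exact hdiff.hasDerivWithinAt
    exact (hd.hasDerivAt (Icc_mem_nhds hy01.1 hy01.2)).hasDerivWithinAt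
  · exact (hρc.mono (Set.Icc_subset_Icc h0 h1)).intervalIntegrable_of_Icc hab

lemma subst_piece (ρ : ℝ → ℝ) (m l : ℕ) (hm : 0 < m) :
    (∫ t in (0:ℝ)..1, ρ (((l : ℝ) + t) / m)) = (m:ℝ) * ∫ y in ((l:ℝ)/m)..(((l:ℝ)+1)/m), ρ y := by
  have hm' : (m : ℝ) ≠ 0 := by positivity
  have h1 : (fun t : ℝ => ρ (((l : ℝ) + t) / m)) = fun t : ℝ => ρ (t / m + (l:ℝ)/m) := by
    funext t; rw [add_div]; ring_nf
  rw [h1, intervalIntegral.integral_comp_div_add (f := ρ) hm' ((l:ℝ)/m)]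
  rw [smul_eq_mul]
  rw [zero_div, zero_add, add_div, add_comm ((l:ℝ)/(m:ℝ)) (1/(m:ℝ))]

set_option maxHeartbeats 2000000 in
theorem confidence_interval_for_density
    {Ω : Type*} [MeasurableSpace Ω] (P : Measure Ω) [IsProbabilityMeasure P]
    (n : ℕ) (hn : 2 ≤ n) (X : Fin n → Ω → ℝ)
    (hmeas : ∀ r, Measurable (X r))
    (hindep : iIndepFun X P)
    (hval : ∀ r ω, X r ω ∈ Set.Icc (0:ℝ) 1)
    (F : ℝ → ℝ) (hFcont : Continuous F)
    (hcdf : ∀ r y, (P {ω | X r ω ≤ y}).toReal = F y)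
    (m : ℕ) (hm : 1 < m)
    (α : ℝ) (hα : α ∈ Set.Ioo (0:ℝ) 1)
    (hF : ContDiffOn ℝ 1 F (Set.Icc 0 1))
    (ρ : ℝ → ℝ) (hρ : ρ = derivWithin F (Set.Icc 0 1))
    (hρpos : ∀ y ∈ Set.Ioo (0:ℝ) 1, 0 < ρ y)
    (x : ℝ) (hx : x ∈ Set.Ioo (0:ℝ) 1)
    (hmn : (m : ℝ) / n ≤ ρ x / (lAlpha α) ^ 2)
    (hbias : |BK1 m ρ x - ρ x| ≤
      min (ρ x / (lAlpha α) ^ 2) (lAlpha α * Real.sqrt ((m : ℝ) * ρ x / n))) :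
    P {ω | |deriv (fun y => BY m n X ω y) x - ρ x| ≥
        (2 * lAlpha α + 1 / lAlpha α) * Real.sqrt ((m : ℝ) * ρ x / n)} ≤
      ENNReal.ofReal α := by
  obtain ⟨hα0, hα1⟩ := hα
  obtain ⟨hx0, hx1⟩ := hx
  have hmpos : (0:ℝ) < m := by positivity
  have hnpos : (0:ℝ) < n := by exact_mod_cast Nat.lt_of_lt_of_le two_pos hn
  set l : ℝ := lAlpha α with hl_def
  set ρx : ℝ := ρ x with hρx_def
  have hρxpos : 0 < ρx := hρpos x ⟨hx0, hx1⟩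
  -- basic facts about l
  have hlog_pos : 0 < Real.log (2 * Real.exp (1/3) / α) := by
    apply Real.log_pos
    have h1 : (1:ℝ) < Real.exp (1/3) := by
      rw [show (1:ℝ) = Real.exp 0 by simp]
      exact Real.exp_lt_exp.mpr (by norm_num)
    rw [lt_div_iff₀ hα0]
    nlinarith
  have hl2 : l ^ 2 = 3 * Real.log (2 * Real.exp (1/3) / α) := by
    rw [hl_def, lAlpha, Real.sq_sqrt (by positivity)]
  have hlog2a : Real.log (2/α) = (l^2 - 1) / 3 := by
    have h1 : 2 * Real.exp (1/3) / α = (2/α) * Real.exp (1/3) := by ring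
    rw [h1, Real.log_mul (by positivity) (Real.exp_ne_zero _), Real.log_exp] at hl2
    linarith
  have hlog2a_pos : 0 < Real.log (2/α) := Real.log_pos (by rw [lt_div_iff₀ hα0]; linarith)
  have hl2gt1 : 1 < l ^ 2 := by rw [hlog2a] at hlog2a_pos; linarith
  have hlpos : 0 < l := by
    rw [hl_def, lAlpha]; positivity
  -- sigma and s
  set σ : ℝ := Real.sqrt ((m:ℝ) * ρx / n) with hσ_def
  set s : ℝ := Real.sqrt ((n:ℝ) * ρx / m) with hs_def
  have hσpos : 0 < σ := Real.sqrt_pos.mpr (by positivity)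
  have hspos : 0 < s := Real.sqrt_pos.mpr (by positivity)
  have hs2 : s ^ 2 = (n:ℝ) * ρx / m := Real.sq_sqrt (by positivity)
  have hσ2 : σ ^ 2 = (m:ℝ) * ρx / n := Real.sq_sqrt (by positivity)
  have hns : ((n:ℝ)/m) * σ = s := by
    rw [hσ_def, hs_def]
    rw [show (n:ℝ) * ρx / m = ((n:ℝ)/m)^2 * ((m:ℝ) * ρx / n) by field_simp]
    rw [Real.sqrt_mul (by positivity), Real.sqrt_sq (by positivity)]
  have hls : l ≤ s := by
    have h1 : l^2 ≤ s^2 := by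
      rw [hs2]
      rw [div_le_div_iff₀ hnpos (by positivity)] at hmn
      rw [le_div_iff₀ hmpos]
      nlinarith
    nlinarith
  -- the auxiliary function g
  set g : ℝ → ℝ := fun u => ∑ j ∈ range m, bern (m-1) j x *
      ((if u ≤ ((j:ℝ)+1)/m then (1:ℝ) else 0) - (if u ≤ (j:ℝ)/m then (1:ℝ) else 0)) with hg_def
  have hgmeas : Measurable g := by
    apply Finset.measurable_sum
    intro j _
    apply Measurable.const_mul
    apply Measurable.sub
    · exact Measurable.ite (measurableSet_Iic) measurable_const measurable_const
    · exact Measurable.ite (measurableSet_Iic) measurable_const measurable_const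
  have hg0 : ∀ u, 0 ≤ g u := by
    intro u
    apply Finset.sum_nonneg
    intro j _
    apply mul_nonneg (bern_nonneg hx0.le hx1.le)
    have hjj : (j:ℝ)/m ≤ ((j:ℝ)+1)/m := by
      gcongr
      linarith
    by_cases h1 : u ≤ (j:ℝ)/m
    · simp [h1, h1.trans hjj]
    · by_cases h2 : u ≤ ((j:ℝ)+1)/m <;> simp [h1, h2]
  have hg1 : ∀ u, g u ≤ 1 := by
    intro u
    have hsum1 : ∑ j ∈ range m, bern (m-1) j x = 1 := by
      have := bern_sum (m-1) x
      rwa [show m - 1 + 1 = m by omega] at this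
    rw [← hsum1]
    apply Finset.sum_le_sum
    intro j _
    have hb := bern_nonneg (m := m-1) (k := j) hx0.le hx1.le
    have hd : ((if u ≤ ((j:ℝ)+1)/m then (1:ℝ) else 0) - (if u ≤ (j:ℝ)/m then (1:ℝ) else 0)) ≤ 1 := by
      split_ifs <;> norm_num
    calc bern (m-1) j x * ((if u ≤ ((j:ℝ)+1)/m then (1:ℝ) else 0) - (if u ≤ (j:ℝ)/m then (1:ℝ) else 0))
        ≤ bern (m-1) j x * 1 := mul_le_mul_of_nonneg_left hd hb
      _ = bern (m-1) j x := mul_one _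
  -- the random variables Z r = g (X r)
  set Z : Fin n → Ω → ℝ := fun r ω => g (X r ω) with hZ_def
  have hZmeas : ∀ r, Measurable (Z r) := fun r => hgmeas.comp (hmeas r)
  have hZ0 : ∀ r ω, 0 ≤ Z r ω := fun r ω => hg0 _
  have hZ1 : ∀ r ω, Z r ω ≤ 1 := fun r ω => hg1 _
  have hZint : ∀ r, Integrable (Z r) P := by
    intro r
    refine (integrable_const (1:ℝ)).mono' ((hZmeas r).aestronglyMeasurable) ?_
    filter_upwards with ω
    rw [Real.norm_eq_abs, abs_of_nonneg (hZ0 r ω)]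
    exact hZ1 r ω
  have hZ2int : ∀ r, Integrable (fun ω => (Z r ω)^2) P := by
    intro r
    refine (integrable_const (1:ℝ)).mono' (((hZmeas r).pow_const 2).aestronglyMeasurable) ?_
    filter_upwards with ω
    rw [Real.norm_eq_abs, abs_of_nonneg (by positivity)]
    nlinarith [hZ0 r ω, hZ1 r ω]
  -- indicator integrals
  have hindint : ∀ (r : Fin n) (y : ℝ),
      Integrable (fun ω => if X r ω ≤ y then (1:ℝ) else 0) P := by
    intro r y
    have hms : MeasurableSet {ω | X r ω ≤ y} := hmeas r measurableSet_Iic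
    have he : (fun ω => if X r ω ≤ y then (1:ℝ) else 0)
        = Set.indicator {ω | X r ω ≤ y} (fun _ => (1:ℝ)) := by
      funext ω; by_cases h : X r ω ≤ y <;> simp [Set.indicator_apply, h]
    rw [he]
    exact (integrable_const (1:ℝ)).indicator hms
  have hind : ∀ (r : Fin n) (y : ℝ),
      (∫ ω, (if X r ω ≤ y then (1:ℝ) else 0) ∂P) = F y := by
    intro r y
    have hms : MeasurableSet {ω | X r ω ≤ y} := hmeas r measurableSet_Iic
    have he : (fun ω => if X r ω ≤ y then (1:ℝ) else 0)
        = Set.indicator {ω | X r ω ≤ y} (fun _ => (1:ℝ)) := by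
      funext ω; by_cases h : X r ω ≤ y <;> simp [Set.indicator_apply, h]
    rw [he, MeasureTheory.integral_indicator_const (1:ℝ) hms, smul_eq_mul, mul_one]; exact hcdf r y
  -- expectation of Z r
  set μ₀ : ℝ := ∑ j ∈ range m, bern (m-1) j x * (F (((j:ℝ)+1)/m) - F ((j:ℝ)/m)) with hμ₀_def
  have hEZ : ∀ r, (∫ ω, Z r ω ∂P) = μ₀ := by
    intro r
    have : (∫ ω, Z r ω ∂P) = ∑ j ∈ range m, ∫ ω, bern (m-1) j x *
        ((if X r ω ≤ ((j:ℝ)+1)/m then (1:ℝ) else 0) - (if X r ω ≤ (j:ℝ)/m then (1:ℝ) else 0)) ∂P := by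
      rw [← integral_finset_sum]
      intro j _
      exact (((hindint r (((j:ℝ)+1)/m)).sub (hindint r ((j:ℝ)/m))).const_mul _)
    rw [this]
    apply Finset.sum_congr rfl
    intro j _
    rw [MeasureTheory.integral_const_mul, integral_sub (hindint r _) (hindint r _), hind, hind]
  -- second moment bound
  have hEZ2 : ∀ r, (∫ ω, (Z r ω)^2 ∂P) ≤ μ₀ := by
    intro r
    rw [← hEZ r]
    apply integral_mono (hZ2int r) (hZint r)
    intro ω
    show Z r ω ^ 2 ≤ Z r ω
    nlinarith [hZ0 r ω, hZ1 r ω]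
  have hμ₀0 : 0 ≤ μ₀ := by
    rw [← hEZ ⟨0, by omega⟩]
    apply integral_nonneg
    intro ω; exact hZ0 _ _
  -- BK1 identity  : m * μ₀ = BK1 m ρ x
  have hBK1 : (m:ℝ) * μ₀ = BK1 m ρ x := by
    rw [BK1, show m - 1 + 1 = m by omega, hμ₀_def, Finset.mul_sum]
    apply Finset.sum_congr rfl
    intro j hj
    have hjm : j + 1 ≤ m := by
      have := mem_range.mp hj; omega
    have hab : (j:ℝ)/m ≤ ((j:ℝ)+1)/m := by gcongr; linarith
    have h0a : (0:ℝ) ≤ (j:ℝ)/m := by positivity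
    have h1b : ((j:ℝ)+1)/m ≤ 1 := by
      rw [div_le_one hmpos]
      exact_mod_cast hjm
    rw [subst_piece ρ m j (by omega), ftc_piece F ρ hFcont hF hρ hab h0a h1b]
    ring
  -- derivative identity
  have hderiv : ∀ ω, deriv (fun y => BY m n X ω y) x = ((m:ℝ)/n) * ∑ r, g (X r ω) := by
    intro ω
    have h := hasDerivAt_bern_combo m (by omega) (fun k => empY n X ((k:ℝ)/m) ω) x
    have hBYeq : (fun y => BY m n X ω y)
        = (fun y => ∑ k ∈ range (m+1), (fun k : ℕ => empY n X ((k:ℝ)/m) ω) k * bern m k y) := rfl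
    rw [hBYeq, h.deriv]
    have step1 : ∀ j ∈ range m, ((fun k : ℕ => empY n X ((k:ℝ)/m) ω) (j+1)
          - (fun k : ℕ => empY n X ((k:ℝ)/m) ω) j) * bern (m-1) j x
        = ∑ r, (1/(n:ℝ)) * (bern (m-1) j x *
            ((if X r ω ≤ ((j:ℝ)+1)/m then (1:ℝ) else 0) - (if X r ω ≤ (j:ℝ)/m then (1:ℝ) else 0))) := by
      intro j _
      simp only [empY]
      push_cast
      rw [← mul_sub, ← Finset.sum_sub_distrib, ← Finset.mul_sum, ← Finset.mul_sum]
      ring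
    rw [Finset.sum_congr rfl step1, Finset.sum_comm]
    rw [Finset.mul_sum]
    rw [Finset.mul_sum]
    apply Finset.sum_congr rfl
    intro r _
    rw [← Finset.mul_sum]
    simp only [hg_def]
    ring
  -- the sum S and its properties
  set S : Ω → ℝ := fun ω => ∑ r, g (X r ω) with hS_def
  have hSZ : (∑ r, Z r) = S := by
    funext ω; simp [Finset.sum_apply, hZ_def, hS_def]
  have hSmeas : Measurable S := by
    apply Finset.measurable_sum
    intro r _
    exact hgmeas.comp (hmeas r)
  have hS0 : ∀ ω, 0 ≤ S ω := by
    intro ω; apply Finset.sum_nonneg; intro r _; exact hg0 _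
  have hSn : ∀ ω, S ω ≤ n := by
    intro ω
    calc S ω ≤ ∑ _r : Fin n, (1:ℝ) := Finset.sum_le_sum (fun r _ => hg1 _)
      _ = n := by simp
  have hexpSint : ∀ t : ℝ, Integrable (fun ω => Real.exp (t * S ω)) P := by
    intro t
    refine (integrable_const (Real.exp (|t| * n))).mono'
      ((hSmeas.const_mul t).exp.aestronglyMeasurable) ?_
    filter_upwards with ω
    rw [Real.norm_eq_abs, abs_of_nonneg (Real.exp_pos _).le, Real.exp_le_exp]
    calc t * S ω ≤ |t| * S ω := mul_le_mul_of_nonneg_right (le_abs_self t) (hS0 ω)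
      _ ≤ |t| * n := mul_le_mul_of_nonneg_left (hSn ω) (abs_nonneg t)
  have hexpZint : ∀ (r : Fin n) (t : ℝ), Integrable (fun ω => Real.exp (t * Z r ω)) P := by
    intro r t
    refine (integrable_const (Real.exp (|t|))).mono'
      (((hZmeas r).const_mul t).exp.aestronglyMeasurable) ?_
    filter_upwards with ω
    rw [Real.norm_eq_abs, abs_of_nonneg (Real.exp_pos _).le, Real.exp_le_exp]
    calc t * Z r ω ≤ |t| * Z r ω := mul_le_mul_of_nonneg_right (le_abs_self t) (hZ0 r ω)
      _ ≤ |t| * 1 := mul_le_mul_of_nonneg_left (hZ1 r ω) (abs_nonneg t)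
      _ = |t| := mul_one _
  -- independence and the product formula for the mgf
  have hindepZ : iIndepFun Z P := by
    exact hindep.comp (fun _ => g) (fun _ => hgmeas)
  have hmgfS : ∀ t : ℝ, mgf S P t = ∏ r, mgf (Z r) P t := by
    intro t
    rw [← hSZ]
    exact hindepZ.mgf_sum hZmeas Finset.univ
  -- the Chernoff parameter
  set lam : ℝ := l / ((109/75) * s) with hlam_def
  have hlampos : 0 < lam := by positivity
  have hlam1 : lam ≤ 1 := by
    rw [hlam_def, div_le_one (by positivity)]
    nlinarith
  have hlamZ01 : ∀ (r : Fin n) ω, 0 ≤ lam * Z r ω ∧ lam * Z r ω ≤ 1 := by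
    intro r ω
    constructor
    · exact mul_nonneg hlampos.le (hZ0 r ω)
    · calc lam * Z r ω ≤ 1 * 1 :=
          mul_le_mul hlam1 (hZ1 r ω) (hZ0 r ω) one_pos.le
        _ = 1 := mul_one 1
  -- upper mgf bound
  have hmgfU : ∀ r : Fin n, mgf (Z r) P lam ≤ Real.exp ((lam + (109/150) * lam^2) * μ₀) := by
    intro r
    have i1 : Integrable (fun ω => 1 + lam * Z r ω) P :=
      (integrable_const (1:ℝ)).add ((hZint r).const_mul lam)
    have i2 : Integrable (fun ω => (109/150) * lam^2 * (Z r ω)^2) P :=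
      (hZ2int r).const_mul _
    have hquadint : Integrable (fun ω => 1 + lam * Z r ω + (109/150) * lam^2 * (Z r ω)^2) P :=
      i1.add i2
    have hpt : ∀ ω, Real.exp (lam * Z r ω) ≤ 1 + lam * Z r ω + (109/150) * lam^2 * (Z r ω)^2 := by
      intro ω
      obtain ⟨h1, h2⟩ := hlamZ01 r ω
      have := my_exp_upper h1 h2
      nlinarith
    calc mgf (Z r) P lam = ∫ ω, Real.exp (lam * Z r ω) ∂P := rfl
      _ ≤ ∫ ω, (1 + lam * Z r ω + (109/150) * lam^2 * (Z r ω)^2) ∂P :=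
          integral_mono (hexpZint r lam) hquadint hpt
      _ = 1 + lam * μ₀ + (109/150) * lam^2 * ∫ ω, (Z r ω)^2 ∂P := by
          rw [integral_add i1 i2, integral_add (integrable_const (1:ℝ))
            ((hZint r).const_mul lam), MeasureTheory.integral_const_mul,
            MeasureTheory.integral_const_mul, integral_const, hEZ r]
          simp
      _ ≤ 1 + lam * μ₀ + (109/150) * lam^2 * μ₀ := by
          have := hEZ2 r
          nlinarith [sq_nonneg lam]
      _ ≤ Real.exp ((lam + (109/150) * lam^2) * μ₀) := by
          have := Real.add_one_le_exp ((lam + (109/150) * lam^2) * μ₀)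
          nlinarith
  -- lower mgf bound
  have hmgfL : ∀ r : Fin n, mgf (Z r) P (-lam) ≤ Real.exp ((-lam + lam^2/2) * μ₀) := by
    intro r
    have i1 : Integrable (fun ω => 1 - lam * Z r ω) P :=
      (integrable_const (1:ℝ)).sub ((hZint r).const_mul lam)
    have i2 : Integrable (fun ω => lam^2/2 * (Z r ω)^2) P :=
      (hZ2int r).const_mul _
    have hquadint : Integrable (fun ω => 1 - lam * Z r ω + lam^2/2 * (Z r ω)^2) P :=
      i1.add i2
    have hpt : ∀ ω, Real.exp (-lam * Z r ω) ≤ 1 - lam * Z r ω + lam^2/2 * (Z r ω)^2 := by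
      intro ω
      obtain ⟨h1, _⟩ := hlamZ01 r ω
      have h2 := my_exp_neg_upper h1
      rw [show -lam * Z r ω = -(lam * Z r ω) by ring]
      nlinarith
    calc mgf (Z r) P (-lam) = ∫ ω, Real.exp (-lam * Z r ω) ∂P := rfl
      _ ≤ ∫ ω, (1 - lam * Z r ω + lam^2/2 * (Z r ω)^2) ∂P :=
          integral_mono (hexpZint r (-lam)) hquadint hpt
      _ = 1 - lam * μ₀ + lam^2/2 * ∫ ω, (Z r ω)^2 ∂P := by
          rw [integral_add i1 i2, integral_sub (integrable_const (1:ℝ))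
            ((hZint r).const_mul lam), MeasureTheory.integral_const_mul,
            MeasureTheory.integral_const_mul, integral_const, hEZ r]
          simp
      _ ≤ 1 - lam * μ₀ + lam^2/2 * μ₀ := by
          have := hEZ2 r
          nlinarith [sq_nonneg lam]
      _ ≤ Real.exp ((-lam + lam^2/2) * μ₀) := by
          have := Real.add_one_le_exp ((-lam + lam^2/2) * μ₀)
          nlinarith
  -- the deviation threshold
  set ν : ℝ := (n:ℝ) * μ₀ with hν_def
  set t' : ℝ := (l + 1/l) * s with ht'_def
  have hν : ν ≤ s^2 * (1 + 1/l^2) := by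
    have habs : BK1 m ρ x - ρx ≤ ρx / l^2 := (abs_le.mp (hbias.trans (min_le_left _ _))).2
    have h1 : (m:ℝ) * ν = (n:ℝ) * BK1 m ρ x := by rw [hν_def, ← hBK1]; ring
    have h2 : (m:ℝ) * (s^2 * (1+1/l^2)) = (n:ℝ) * (ρx * (1+1/l^2)) := by
      rw [hs2]; field_simp
    have h3 : (n:ℝ) * BK1 m ρ x ≤ (n:ℝ) * (ρx * (1+1/l^2)) := by
      apply mul_le_mul_of_nonneg_left ?_ hnpos.le
      have : ρx * (1+1/l^2) = ρx + ρx/l^2 := by field_simp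
      linarith
    have h4 : (m:ℝ) * ν ≤ (m:ℝ) * (s^2 * (1+1/l^2)) := by linarith
    exact le_of_mul_le_mul_left h4 hmpos
  have hsne : s ≠ 0 := ne_of_gt hspos
  have hlne : l ≠ 0 := ne_of_gt hlpos
  have hlamt : lam * t' = (l^2 + 1) * (75/109) := by
    rw [hlam_def, ht'_def]; field_simp
  have hlam2ν : lam^2 * ν ≤ (l^2+1) * (75/109)^2 := by
    have h0 : lam^2 * (s^2*(1+1/l^2)) = (l^2+1) * (75/109)^2 := by
      rw [hlam_def]; field_simp
    calc lam^2 * ν ≤ lam^2 * (s^2*(1+1/l^2)) :=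
        mul_le_mul_of_nonneg_left hν (sq_nonneg lam)
      _ = (l^2+1) * (75/109)^2 := h0
  have hloga2 : Real.log (α/2) = -((l^2-1)/3) := by
    rw [Real.log_div (ne_of_gt hα0) two_ne_zero]
    rw [Real.log_div two_ne_zero (ne_of_gt hα0)] at hlog2a
    linarith
  -- exponent bounds
  have hexpU : -lam * (ν + t') + (n:ℝ) * ((lam + (109/150) * lam^2) * μ₀) ≤ Real.log (α/2) := by
    have hE : -lam * (ν + t') + (n:ℝ) * ((lam + (109/150) * lam^2) * μ₀)
        = -(lam * t') + (109/150) * (lam^2 * ν) := by rw [hν_def]; ring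
    rw [hE, hloga2]
    nlinarith [sq_nonneg l, hlamt, hlam2ν]
  have hexpL : (-(-lam)) * (ν - t') + (n:ℝ) * ((-lam + lam^2/2) * μ₀) ≤ Real.log (α/2) := by
    have hE : (-(-lam)) * (ν - t') + (n:ℝ) * ((-lam + lam^2/2) * μ₀)
        = -(lam * t') + (1/2) * (lam^2 * ν) := by rw [hν_def]; ring
    rw [hE, hloga2]
    nlinarith [sq_nonneg l, hlamt, hlam2ν]
  -- Chernoff bounds
  have hα2 : (0:ℝ) < α/2 := by linarith
  have hupper : (P {ω | ν + t' ≤ S ω}).toReal ≤ α/2 := by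
    have h1 := measure_ge_le_exp_mul_mgf (μ := P) (X := S) (ν + t') hlampos.le (hexpSint lam)
    have h2 : mgf S P lam ≤ Real.exp ((n:ℝ) * ((lam + (109/150) * lam^2) * μ₀)) := by
      rw [hmgfS lam]
      calc ∏ r, mgf (Z r) P lam
          ≤ ∏ _r : Fin n, Real.exp ((lam + (109/150) * lam^2) * μ₀) :=
            Finset.prod_le_prod (fun r _ => mgf_nonneg) (fun r _ => hmgfU r)
        _ = Real.exp ((lam + (109/150) * lam^2) * μ₀) ^ n := by
            rw [Finset.prod_const, Finset.card_univ, Fintype.card_fin]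
        _ = Real.exp ((n:ℝ) * ((lam + (109/150) * lam^2) * μ₀)) := by
            rw [Real.exp_nat_mul]
    calc (P {ω | ν + t' ≤ S ω}).toReal
        ≤ Real.exp (-lam * (ν + t')) * mgf S P lam := h1
      _ ≤ Real.exp (-lam * (ν + t')) * Real.exp ((n:ℝ) * ((lam + (109/150) * lam^2) * μ₀)) :=
          mul_le_mul_of_nonneg_left h2 (Real.exp_pos _).le
      _ = Real.exp (-lam * (ν + t') + (n:ℝ) * ((lam + (109/150) * lam^2) * μ₀)) := by
          rw [← Real.exp_add]
      _ ≤ Real.exp (Real.log (α/2)) := Real.exp_le_exp.mpr hexpU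
      _ = α/2 := Real.exp_log hα2
  have hlower : (P {ω | S ω ≤ ν - t'}).toReal ≤ α/2 := by
    have h1 := measure_le_le_exp_mul_mgf (μ := P) (X := S) (ν - t')
      (neg_nonpos.mpr hlampos.le) (hexpSint (-lam))
    have h2 : mgf S P (-lam) ≤ Real.exp ((n:ℝ) * ((-lam + lam^2/2) * μ₀)) := by
      rw [hmgfS (-lam)]
      calc ∏ r, mgf (Z r) P (-lam)
          ≤ ∏ _r : Fin n, Real.exp ((-lam + lam^2/2) * μ₀) :=
            Finset.prod_le_prod (fun r _ => mgf_nonneg) (fun r _ => hmgfL r)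
        _ = Real.exp ((-lam + lam^2/2) * μ₀) ^ n := by
            rw [Finset.prod_const, Finset.card_univ, Fintype.card_fin]
        _ = Real.exp ((n:ℝ) * ((-lam + lam^2/2) * μ₀)) := by
            rw [Real.exp_nat_mul]
    calc (P {ω | S ω ≤ ν - t'}).toReal
        ≤ Real.exp (-(-lam) * (ν - t')) * mgf S P (-lam) := h1
      _ ≤ Real.exp (-(-lam) * (ν - t')) * Real.exp ((n:ℝ) * ((-lam + lam^2/2) * μ₀)) :=
          mul_le_mul_of_nonneg_left h2 (Real.exp_pos _).le
      _ = Real.exp ((-(-lam)) * (ν - t') + (n:ℝ) * ((-lam + lam^2/2) * μ₀)) := by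
          rw [← Real.exp_add]
      _ ≤ Real.exp (Real.log (α/2)) := Real.exp_le_exp.mpr hexpL
      _ = α/2 := Real.exp_log hα2
  -- event inclusion
  have hσs : σ = (m:ℝ)/n * s := by
    rw [← hns]; field_simp
  have hsub : {ω | |deriv (fun y => BY m n X ω y) x - ρ x| ≥ (2*l + 1/l) * σ}
      ⊆ {ω | ν + t' ≤ S ω} ∪ {ω | S ω ≤ ν - t'} := by
    intro ω hω
    simp only [Set.mem_setOf_eq, ge_iff_le] at hω
    rw [hderiv ω] at hω
    have hSω : (∑ r, g (X r ω)) = S ω := rfl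
    rw [hSω] at hω
    have hBKb : |BK1 m ρ x - ρx| ≤ l * σ := hbias.trans (min_le_right _ _)
    have hBν : BK1 m ρ x = (m:ℝ)/n * ν := by
      rw [hν_def, ← hBK1]; field_simp
    have htri : |(m:ℝ)/n * S ω - ρx| ≤ |(m:ℝ)/n * S ω - BK1 m ρ x| + |BK1 m ρ x - ρx| := by
      have h := abs_add_le ((m:ℝ)/n * S ω - BK1 m ρ x) (BK1 m ρ x - ρx)
      have he : ((m:ℝ)/n * S ω - BK1 m ρ x) + (BK1 m ρ x - ρx) = (m:ℝ)/n * S ω - ρx := by ring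
      rwa [he] at h
    have h2 : (l + 1/l) * σ ≤ |(m:ℝ)/n * S ω - BK1 m ρ x| := by
      have he : (2*l + 1/l) * σ = (l + 1/l)*σ + l*σ := by ring
      have hω' : (2*l + 1/l) * σ ≤ |(m:ℝ)/n * S ω - ρx| := hω
      linarith
    rw [hBν] at h2
    have h3 : |(m:ℝ)/n * S ω - (m:ℝ)/n * ν| = (m:ℝ)/n * |S ω - ν| := by
      rw [← mul_sub, abs_mul, abs_of_pos (by positivity : (0:ℝ) < (m:ℝ)/n)]
    rw [h3, hσs] at h2
    have hmn0 : 0 < (m:ℝ)/n := by positivity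
    have h4 : t' ≤ |S ω - ν| := by
      rw [ht'_def]
      have h5 : (m:ℝ)/n * ((l + 1/l) * s) ≤ (m:ℝ)/n * |S ω - ν| := by linarith
      exact le_of_mul_le_mul_left h5 hmn0
    rcases le_abs.mp h4 with h5 | h5
    · left
      simp only [Set.mem_setOf_eq]
      linarith
    · right
      simp only [Set.mem_setOf_eq]
      linarith
  -- conclusion
  have hA : P {ω | ν + t' ≤ S ω} ≤ ENNReal.ofReal (α/2) :=
    (ENNReal.le_ofReal_iff_toReal_le (measure_ne_top _ _) hα2.le).mpr hupper
  have hB : P {ω | S ω ≤ ν - t'} ≤ ENNReal.ofReal (α/2) :=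
    (ENNReal.le_ofReal_iff_toReal_le (measure_ne_top _ _) hα2.le).mpr hlower
  calc P {ω | |deriv (fun y => BY m n X ω y) x - ρ x| ≥ (2*l + 1/l) * σ}
      ≤ P ({ω | ν + t' ≤ S ω} ∪ {ω | S ω ≤ ν - t'}) := measure_mono hsub
    _ ≤ P {ω | ν + t' ≤ S ω} + P {ω | S ω ≤ ν - t'} := measure_union_le _ _
    _ ≤ ENNReal.ofReal (α/2) + ENNReal.ofReal (α/2) := add_le_add hA hB
    _ = ENNReal.ofReal α := by
        rw [← ENNReal.ofReal_add hα2.le hα2.le]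
        norm_num
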